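/- Let b > 0, 0 < θ ≤ α, and let f : ℝ → ℂ be twice continuously differentiable with |f(x)| ≤ C₁ e^{-α·bπx²} and |f''(x)| ≤ C₂ e^{-θ·bπx²} for all x ∈ ℝ. Then there is a constant C > 0 such that |f'(x)| ≤ C e^{-((α+θ)/2)·bπx²} for all x ∈ ℝ. -/

import Mathlib

open Real Set

lemma key_landau(f : ℝ → ℂ) (hf : ContDiff ℝ 2 f) (x h M : ℝ) (hh : h ≠ 0)
    (hM : ∀ y ∈ Set.uIcc x (x + h), ‖deriv (deriv f) y‖ ≤ M) :
    ‖deriv f x‖ ≤ (‖f (x + h)‖ + ‖f x‖) / |h| + M * |h| := by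
  have hf2 : ContDiff ℝ (1 + 1) f := by exact_mod_cast hf
  have hf1 : ContDiff ℝ 1 (deriv f) := (contDiff_succ_iff_deriv.mp hf2).2.2
  have hdf : Differentiable ℝ f := hf.differentiable (by norm_num)
  have hdf' : Differentiable ℝ (deriv f) := hf1.differentiable (by norm_num)
  have habs : ∀ t ∈ Set.uIcc x (x + h), |t - x| ≤ |h| := by
    intro t ht
    rcases Set.mem_uIcc.mp ht with ⟨h1, h2⟩ | ⟨h1, h2⟩ <;> rw [abs_le] <;>
      constructor <;> cases' abs_cases h with hc hc <;> linarith [hc.1, hc.2]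
  have step1 : ∀ t ∈ Set.uIcc x (x + h), ‖deriv f t - deriv f x‖ ≤ M * |h| := by
    intro t ht
    have := Convex.norm_image_sub_le_of_norm_deriv_le (f := deriv f)
      (fun y _ => hdf' y) hM (convex_uIcc x (x + h)) (Set.left_mem_uIcc) ht
    calc ‖deriv f t - deriv f x‖ ≤ M * ‖t - x‖ := this
    _ ≤ M * |h| := by
        have hM0 : 0 ≤ M := le_trans (norm_nonneg _) (hM x Set.left_mem_uIcc)
        exact mul_le_mul_of_nonneg_left (by simpa using habs t ht) hM0
  set g : ℝ → ℂ := fun t => f t - f x - (t - x) • deriv f x with hg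
  have hgd : ∀ t : ℝ, HasDerivAt g (deriv f t - deriv f x) t := by
    intro t
    have h1 : HasDerivAt (fun t : ℝ => (t - x) • deriv f x) ((1 : ℝ) • deriv f x) t :=
      (((hasDerivAt_id t).sub_const x).smul_const (deriv f x))
    have h2 := ((hdf t).hasDerivAt.sub_const (f x)).sub h1
    rw [one_smul] at h2
    exact h2
  have step2 : ‖g (x + h) - g x‖ ≤ (M * |h|) * ‖(x + h) - x‖ := by
    refine Convex.norm_image_sub_le_of_norm_hasDerivWithin_le
      (f' := fun t => deriv f t - deriv f x)
      (fun y _ => (hgd y).hasDerivWithinAt) step1 (convex_uIcc x (x + h))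
      Set.left_mem_uIcc Set.right_mem_uIcc
  have hgx : g x = 0 := by simp [hg]
  have hgxh : g (x + h) = f (x + h) - f x - h • deriv f x := by simp [hg]
  rw [hgx, sub_zero, hgxh] at step2
  have htri : ‖h • deriv f x‖ ≤ ‖f (x + h)‖ + ‖f x‖ + (M * |h|) * |h| := by
    have : ‖h • deriv f x‖ ≤ ‖f (x + h) - f x‖ + ‖f (x + h) - f x - h • deriv f x‖ := by
      have := norm_sub_le (f (x + h) - f x) (f (x + h) - f x - h • deriv f x)
      simpa using this
    have h2 : ‖f (x + h) - f x‖ ≤ ‖f (x + h)‖ + ‖f x‖ := norm_sub_le _ _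
    have h3 : ‖(x + h) - x‖ = |h| := by simp
    rw [h3] at step2
    linarith
  rw [norm_smul, Real.norm_eq_abs] at htri
  have hpos : 0 < |h| := abs_pos.mpr hh
  rw [div_add' _ _ _ hpos.ne', le_div_iff₀ hpos]
  nlinarith [htri, abs_nonneg h]

/-- the Taylor-expansion interpolation step of the bootstrap: Gaussian bounds of
exponents `αbπ` for `f` and `θbπ` for `f''` give a Gaussian bound of exponent `((α+θ)/2)bπ`
for `f'`. -/
theorem stmt_9 (b θ α C₁ C₂ : ℝ) (hb : 0 < b) (hθ : 0 < θ) (hθα : θ ≤ α)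
    (f : ℝ → ℂ) (hf : ContDiff ℝ 2 f)
    (h0 : ∀ x : ℝ, ‖f x‖ ≤ C₁ * Real.exp (-α * b * π * x ^ 2))
    (h2 : ∀ x : ℝ, ‖deriv (deriv f) x‖ ≤ C₂ * Real.exp (-θ * b * π * x ^ 2)) :
    ∃ C > 0, ∀ x : ℝ, ‖deriv f x‖ ≤ C * Real.exp (-((α + θ) / 2) * b * π * x ^ 2) := by
  have hπ := Real.pi_pos
  refine ⟨2 * max C₁ 0 + max C₂ 0 + 1, by
    have g1 : (0:ℝ) ≤ max C₁ 0 := le_max_right _ _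
    have g2 : (0:ℝ) ≤ max C₂ 0 := le_max_right _ _
    linarith, fun x => ?_⟩
  have hα : 0 < α := lt_of_lt_of_le hθ hθα
  have hαbπ : 0 < α * b * π := by positivity
  have hθbπ : 0 < θ * b * π := by positivity
  set ε : ℝ := Real.exp (-((α - θ) / 2 * b * π) * x ^ 2) with hεdef
  have hε : 0 < ε := Real.exp_pos _
  set h : ℝ := if 0 ≤ x then ε else -ε with hhdef
  have hhne : h ≠ 0 := by
    by_cases hx : 0 ≤ x <;> simp [hhdef, hx, hε.ne']
  have habsh : |h| = ε := by
    by_cases hx : 0 ≤ x <;> simp [hhdef, hx, abs_of_pos hε]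
  have hsq : ∀ y ∈ Set.uIcc x (x + h), x ^ 2 ≤ y ^ 2 := by
    intro y hy
    by_cases hx : 0 ≤ x
    · have hh' : h = ε := if_pos hx
      rw [Set.uIcc_of_le (by rw [hh']; linarith)] at hy
      nlinarith [hy.1, hy.2]
    · have hh' : h = -ε := if_neg hx
      rw [Set.uIcc_of_ge (by rw [hh']; linarith)] at hy
      push_neg at hx
      nlinarith [hy.1, hy.2]
  have hM : ∀ y ∈ Set.uIcc x (x + h),
      ‖deriv (deriv f) y‖ ≤ max C₂ 0 * Real.exp (-θ * b * π * x ^ 2) := by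
    intro y hy
    calc ‖deriv (deriv f) y‖ ≤ C₂ * Real.exp (-θ * b * π * y ^ 2) := h2 y
    _ ≤ max C₂ 0 * Real.exp (-θ * b * π * y ^ 2) :=
        mul_le_mul_of_nonneg_right (le_max_left _ _) (Real.exp_pos _).le
    _ ≤ max C₂ 0 * Real.exp (-θ * b * π * x ^ 2) := by
        refine mul_le_mul_of_nonneg_left ?_ (le_max_right _ _)
        exact Real.exp_le_exp.mpr (by nlinarith [hsq y hy])
  have key := key_landau f hf x h _ hhne hM
  rw [habsh] at key
  have hfbd : ∀ y : ℝ, x ^ 2 ≤ y ^ 2 → ‖f y‖ ≤ max C₁ 0 * Real.exp (-α * b * π * x ^ 2) := by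
    intro y hy
    calc ‖f y‖ ≤ C₁ * Real.exp (-α * b * π * y ^ 2) := h0 y
    _ ≤ max C₁ 0 * Real.exp (-α * b * π * y ^ 2) :=
        mul_le_mul_of_nonneg_right (le_max_left _ _) (Real.exp_pos _).le
    _ ≤ max C₁ 0 * Real.exp (-α * b * π * x ^ 2) := by
        refine mul_le_mul_of_nonneg_left ?_ (le_max_right _ _)
        exact Real.exp_le_exp.mpr (by nlinarith)
  have hfx := hfbd x le_rfl
  have hfxh := hfbd (x + h) (hsq (x + h) Set.right_mem_uIcc)
  have e1 : Real.exp (-α * b * π * x ^ 2) / ε = Real.exp (-((α + θ) / 2) * b * π * x ^ 2) := by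
    rw [hεdef, ← Real.exp_sub]
    congr 1
    ring
  have e2 : Real.exp (-θ * b * π * x ^ 2) * ε = Real.exp (-((α + θ) / 2) * b * π * x ^ 2) := by
    rw [hεdef, ← Real.exp_add]
    congr 1
    ring
  calc ‖deriv f x‖ ≤ (‖f (x + h)‖ + ‖f x‖) / ε + max C₂ 0 * Real.exp (-θ * b * π * x ^ 2) * ε :=
      key
  _ ≤ (2 * max C₁ 0 * Real.exp (-α * b * π * x ^ 2)) / ε
      + max C₂ 0 * Real.exp (-θ * b * π * x ^ 2) * ε := by
      gcongr
      linarith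
  _ = (2 * max C₁ 0 + max C₂ 0) * Real.exp (-((α + θ) / 2) * b * π * x ^ 2) := by
      rw [mul_div_assoc, e1, mul_assoc (max C₂ 0), e2]
      ring
  _ ≤ (2 * max C₁ 0 + max C₂ 0 + 1) * Real.exp (-((α + θ) / 2) * b * π * x ^ 2) := by
      have := Real.exp_pos (-((α + θ) / 2) * b * π * x ^ 2)
      nlinarith
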